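/- Let F satisfy the two-sided Lipschitz condition of Assumption 2.1 with constants M₁, M₂, let f ∈ (X₋,X_R)_{θ,∞} with norm bound ϱ, θ ∈ (0,1], u > 0, and let g^obs ∈ Y with ‖g^obs − F(f)‖_Y ≤ δ. Let f̂_α minimize h ↦ (1/(2α))‖g^obs−F(h)‖_Y² + (1/u)‖h‖_{X_R}^u. If the discrepancy principle c_D δ ≤ ‖g^obs − F(f̂_α)‖_Y ≤ C_D δ holds with constants 1 < c_D ≤ C_D, and the K-functional approximation f_t (for a suitable t ∼ (δ/ϱ)^{1/θ}) lies in the domain, then ‖f̂_α‖_{X_R} ≤ ‖f_t‖_{X_R} ≤ C ϱ^{1/θ} δ^{(θ−1)/θ} for some constant C depending only on M₂, c_D, θ. -/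

import Mathlib

open Set

/-- The K-functional `K(t,f) = inf_{h ∈ X_R} (‖f−h‖_{X₋} + t‖h‖_{X_R})`. -/
noncomputable def Kfun {E : Type*} [AddCommGroup E]
    (Nm : E → ℝ) (X : Set E) (NX : E → ℝ) (t : ℝ) (f : E) : ℝ :=
  sInf ((fun h => Nm (f - h) + t * NX h) '' X)

/-- Penalty bound under the discrepancy principle (key comparison argument of
Theorem 2.4(c)): if `f̂_α` minimizes the Tikhonov functional for data `g^obs` with
`‖g^obs − F(f)‖ ≤ δ`, the discrepancy principle `c_D δ ≤ ‖g^obs − F(f̂_α)‖ ≤ C_D δ`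
holds, and the K-functional approximation `f_t` (for a suitable `t = κ (δ/ϱ)^{1/θ}`)
lies in the domain, then `‖f̂_α‖_{X_R} ≤ ‖f_t‖_{X_R} ≤ C ϱ^{1/θ} δ^{(θ−1)/θ}` with
`C, κ` depending only on `M₂, c_D, θ`. -/
theorem discrepancy_penalty_bound {E Y : Type*} [AddCommGroup E] [NormedAddCommGroup Y]
    (Nm NR : E → ℝ) (XR DF : Set E) (F : E → Y)
    (M₁ M₂ u θ cD CD : ℝ) (hM₁ : 0 < M₁) (hM₂ : 0 < M₂) (hu : 0 < u)
    (hθ0 : 0 < θ) (hθ1 : θ ≤ 1) (hcD : 1 < cD) (hcDCD : cD ≤ CD)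
    (hNm : ∀ g, 0 ≤ Nm g) (hNR : ∀ g, 0 ≤ NR g) :
    ∃ κ > 0, ∃ C > 0, ∀ (f : E) (ϱ δ α : ℝ) (gobs : Y) (fhat ft : E),
      0 < ϱ → 0 < δ → 0 < α →
      -- two-sided Lipschitz condition of Assumption 2.1 on `D_F ∪ {f}`
      (∀ f₁ ∈ insert f DF, ∀ f₂ ∈ insert f DF,
        M₁⁻¹ * Nm (f₁ - f₂) ≤ ‖F f₁ - F f₂‖ ∧ ‖F f₁ - F f₂‖ ≤ M₂ * Nm (f₁ - f₂)) →
      -- `f ∈ (X₋,X_R)_{θ,∞}` with norm at most `ϱ`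
      (∀ t > 0, Kfun Nm XR NR t f ≤ ϱ * t ^ θ) →
      -- noise level
      ‖gobs - F f‖ ≤ δ →
      -- the K-functional approximation `f_t` for `t = κ (δ/ϱ)^{1/θ}` lies in the domain
      (ft ∈ DF ∧
        Nm (f - ft) ≤ 2 * ϱ * (κ * (δ / ϱ) ^ ((1 : ℝ) / θ)) ^ θ ∧
        NR ft ≤ 2 * ϱ * (κ * (δ / ϱ) ^ ((1 : ℝ) / θ)) ^ (θ - 1)) →
      -- `f̂_α` minimizes the Tikhonov functional over `D_F`
      (fhat ∈ DF ∧ ∀ h ∈ DF,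
        1 / (2 * α) * ‖gobs - F fhat‖ ^ 2 + 1 / u * NR fhat ^ u ≤
          1 / (2 * α) * ‖gobs - F h‖ ^ 2 + 1 / u * NR h ^ u) →
      -- discrepancy principle
      cD * δ ≤ ‖gobs - F fhat‖ → ‖gobs - F fhat‖ ≤ CD * δ →
      NR fhat ≤ NR ft ∧ NR ft ≤ C * ϱ ^ ((1 : ℝ) / θ) * δ ^ ((θ - 1) / θ) := by
  have hθne : θ ≠ 0 := hθ0.ne'
  have hbase : 0 < (cD - 1) / (2 * M₂) := div_pos (by linarith) (by linarith)
  set κ : ℝ := ((cD - 1) / (2 * M₂)) ^ ((1 : ℝ) / θ) with hκdef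
  have hκ : 0 < κ := Real.rpow_pos_of_pos hbase _
  have hκθ : κ ^ θ = (cD - 1) / (2 * M₂) := by
    rw [hκdef, ← Real.rpow_mul hbase.le, one_div_mul_cancel hθne, Real.rpow_one]
  refine ⟨κ, hκ, 2 * κ ^ (θ - 1), by positivity, ?_⟩
  intro f ϱ δ α gobs fhat ft hϱ hδ hα hLip hK hnoise hft hminp hd1 hd2
  obtain ⟨hftD, hftNm, hftNR⟩ := hft
  obtain ⟨hfhatD, hmin⟩ := hminp
  have hdp : 0 < δ / ϱ := div_pos hδ hϱ
  have ht1 : (κ * (δ / ϱ) ^ ((1 : ℝ) / θ)) ^ θ = κ ^ θ * (δ / ϱ) := by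
    rw [Real.mul_rpow hκ.le (Real.rpow_nonneg hdp.le _), ← Real.rpow_mul hdp.le,
      one_div_mul_cancel hθne, Real.rpow_one]
  have ht2 : (κ * (δ / ϱ) ^ ((1 : ℝ) / θ)) ^ (θ - 1)
      = κ ^ (θ - 1) * (δ / ϱ) ^ ((θ - 1) / θ) := by
    rw [Real.mul_rpow hκ.le (Real.rpow_nonneg hdp.le _), ← Real.rpow_mul hdp.le,
      show (1 : ℝ) / θ * (θ - 1) = (θ - 1) / θ by ring]
  -- bound on Nm (f - ft)
  have hNmft : Nm (f - ft) ≤ 2 * κ ^ θ * δ := by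
    rw [ht1] at hftNm
    calc Nm (f - ft) ≤ 2 * ϱ * (κ ^ θ * (δ / ϱ)) := hftNm
      _ = 2 * κ ^ θ * δ := by field_simp
  -- discrepancy comparison: ‖gobs - F ft‖ ≤ cD δ ≤ ‖gobs - F fhat‖
  have hL := hLip f (mem_insert _ _) ft (mem_insert_of_mem _ hftD)
  have hFft : ‖gobs - F ft‖ ≤ cD * δ := by
    have htri : ‖gobs - F ft‖ ≤ ‖gobs - F f‖ + ‖F f - F ft‖ := by
      have h := norm_add_le (gobs - F f) (F f - F ft)
      simpa using h
    have h2 : ‖F f - F ft‖ ≤ M₂ * Nm (f - ft) := hL.2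
    have h3 : M₂ * Nm (f - ft) ≤ M₂ * (2 * κ ^ θ * δ) :=
      mul_le_mul_of_nonneg_left hNmft hM₂.le
    have h4 : M₂ * (2 * κ ^ θ * δ) = (cD - 1) * δ := by
      rw [hκθ]; field_simp
    linarith
  have hle : ‖gobs - F ft‖ ≤ ‖gobs - F fhat‖ := le_trans hFft hd1
  have hsq : ‖gobs - F ft‖ ^ 2 ≤ ‖gobs - F fhat‖ ^ 2 := by
    have h0 : (0 : ℝ) ≤ ‖gobs - F ft‖ := norm_nonneg _
    nlinarith
  have hmin' := hmin ft hftD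
  have hαpos : 0 < 1 / (2 * α) := by positivity
  have hupos : 0 < 1 / u := by positivity
  have hpen : NR fhat ^ u ≤ NR ft ^ u := by
    have h5 := mul_le_mul_of_nonneg_left hsq hαpos.le
    have h6 : 1 / u * NR fhat ^ u ≤ 1 / u * NR ft ^ u := by linarith
    exact le_of_mul_le_mul_left h6 hupos
  have h1 : NR fhat ≤ NR ft := by
    by_contra h
    push_neg at h
    have := Real.rpow_lt_rpow (hNR ft) h hu
    linarith
  refine ⟨h1, ?_⟩
  rw [ht2] at hftNR
  have key : ϱ * (δ / ϱ) ^ ((θ - 1) / θ) = ϱ ^ ((1 : ℝ) / θ) * δ ^ ((θ - 1) / θ) := by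
    rw [Real.div_rpow hδ.le hϱ.le,
      show (1 : ℝ) / θ = 1 - (θ - 1) / θ by field_simp; ring,
      Real.rpow_sub hϱ, Real.rpow_one]
    ring
  calc NR ft ≤ 2 * ϱ * (κ ^ (θ - 1) * (δ / ϱ) ^ ((θ - 1) / θ)) := hftNR
    _ = 2 * κ ^ (θ - 1) * (ϱ * (δ / ϱ) ^ ((θ - 1) / θ)) := by ring
    _ = 2 * κ ^ (θ - 1) * (ϱ ^ ((1 : ℝ) / θ) * δ ^ ((θ - 1) / θ)) := by rw [key]
    _ = 2 * κ ^ (θ - 1) * ϱ ^ ((1 : ℝ) / θ) * δ ^ ((θ - 1) / θ) := by ring
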